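/- Let A, A* be a Leonard pair in 𝒜 ≅ Mat_{d+1}(K). Then there exists a unique antiautomorphism † of 𝒜 such that A† = A and A*† = A*. Moreover †∘† is the identity map on 𝒜. -/

import Mathlib

open Matrix Polynomial

def IsTridiag {K : Type*} [Field K] {n : ℕ} (M : Matrix (Fin n) (Fin n) K) : Prop :=
  ∀ i j : Fin n, ((i : ℕ) + 1 < j ∨ (j : ℕ) + 1 < i) → M i j = 0

def IsIrredTridiag {K : Type*} [Field K] {n : ℕ} (M : Matrix (Fin n) (Fin n) K) : Prop :=
  IsTridiag M ∧ ∀ i j : Fin n, ((i : ℕ) + 1 = j ∨ (j : ℕ) + 1 = i) → M i j ≠ 0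

/-- Entry of a matrix with natural-number indices; `0` when out of range. -/
def mentry {K : Type*} [Field K] {n : ℕ} (M : Matrix (Fin n) (Fin n) K) (i j : ℕ) : K :=
  if h : i < n ∧ j < n then M ⟨i, h.1⟩ ⟨j, h.2⟩ else 0

/-- A family indexed by `Fin (d+1)` viewed as indexed by `ℕ`, with value `0` out of range. -/
def natIdx {d : ℕ} {M : Type*} [Zero M] (E : Fin (d+1) → M) (n : ℕ) : M :=
  if h : n < d + 1 then E ⟨n, h⟩ else 0

/-- A Leonard system of diameter `d` in the matrix algebra `Mat_{d+1}(K)`: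
`A`, `As` are multiplicity-free with eigenvalues `θ i`, `θs i` and primitive
idempotents `E i`, `Es i`, satisfying the tridiagonal conditions. -/
structure LeonardSystem (K : Type*) [Field K] (d : ℕ) where
  A : Matrix (Fin (d+1)) (Fin (d+1)) K
  As : Matrix (Fin (d+1)) (Fin (d+1)) K
  E : Fin (d+1) → Matrix (Fin (d+1)) (Fin (d+1)) K
  Es : Fin (d+1) → Matrix (Fin (d+1)) (Fin (d+1)) K
  θ : Fin (d+1) → K
  θs : Fin (d+1) → K
  θ_inj : Function.Injective θ
  θs_inj : Function.Injective θs
  E_ne : ∀ i, E i ≠ 0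
  Es_ne : ∀ i, Es i ≠ 0
  E_mul : ∀ i j, E i * E j = if i = j then E i else 0
  Es_mul : ∀ i j, Es i * Es j = if i = j then Es i else 0
  E_sum : ∑ i, E i = 1
  Es_sum : ∑ i, Es i = 1
  A_eq : A = ∑ i, θ i • E i
  As_eq : As = ∑ i, θs i • Es i
  EAsE_zero : ∀ i j : Fin (d+1), ((i:ℕ) + 1 < j ∨ (j:ℕ) + 1 < i) → E i * As * E j = 0
  EAsE_ne : ∀ i j : Fin (d+1), ((i:ℕ) + 1 = j ∨ (j:ℕ) + 1 = i) → E i * As * E j ≠ 0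
  EsAEs_zero : ∀ i j : Fin (d+1), ((i:ℕ) + 1 < j ∨ (j:ℕ) + 1 < i) → Es i * A * Es j = 0
  EsAEs_ne : ∀ i j : Fin (d+1), ((i:ℕ) + 1 = j ∨ (j:ℕ) + 1 = i) → Es i * A * Es j ≠ 0

/-- A Leonard pair in `Mat_{d+1}(K)`. -/
structure LeonardPair (K : Type*) [Field K] (d : ℕ) where
  A : Matrix (Fin (d+1)) (Fin (d+1)) K
  As : Matrix (Fin (d+1)) (Fin (d+1)) K
  cond1 : ∃ P : Matrix (Fin (d+1)) (Fin (d+1)) K, IsUnit P ∧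
    IsIrredTridiag (P⁻¹ * A * P) ∧ (P⁻¹ * As * P).IsDiag
  cond2 : ∃ P : Matrix (Fin (d+1)) (Fin (d+1)) K, IsUnit P ∧
    (P⁻¹ * A * P).IsDiag ∧ IsIrredTridiag (P⁻¹ * As * P)


section auxLemmas
variable {K : Type*} [Field K] {d : ℕ}

lemma eig_zero {B : Matrix (Fin (d+1)) (Fin (d+1)) K} (hB : IsIrredTridiag B) {lam : K}
    {v : Fin (d+1) → K} (hv : B.mulVec v = lam • v) (h0 : v 0 = 0) : v = 0 := by
  have key : ∀ m : ℕ, ∀ hm : m < d+1, v ⟨m, hm⟩ = 0 := by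
    intro m
    induction m using Nat.strong_induction_on with
    | _ m IH =>
      match m with
      | 0 => intro hm; exact h0
      | Nat.succ m =>
        intro hm
        have hm' : m < d + 1 := by omega
        have hrow := congrFun hv ⟨m, hm'⟩
        rw [Matrix.mulVec, dotProduct] at hrow
        have hsum : ∑ j, B ⟨m, hm'⟩ j * v j = B ⟨m, hm'⟩ ⟨m+1, hm⟩ * v ⟨m+1, hm⟩ := by
          refine Finset.sum_eq_single _ (fun j _ hj => ?_) (fun h => absurd (Finset.mem_univ _) h)
          rcases lt_or_gt_of_ne (fun h : (j : ℕ) = m + 1 => hj (Fin.ext h)) with hlt | hgt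
          · have : v j = 0 := by
              have := IH j (by omega) j.isLt
              simpa using this
            simp [this]
          · have : B ⟨m, hm'⟩ j = 0 := hB.1 _ _ (Or.inl (by simpa using hgt))
            simp [this]
        rw [hsum] at hrow
        have hvm : v ⟨m, hm'⟩ = 0 := IH m (by omega) hm'
        simp only [Pi.smul_apply, smul_eq_mul, hvm, mul_zero] at hrow
        have hne : B ⟨m, hm'⟩ ⟨m+1, hm⟩ ≠ 0 := hB.2 _ _ (Or.inl rfl)
        exact (mul_eq_zero.mp hrow).resolve_left hne
  funext i
  simpa using key i.val i.isLt

lemma eig_dep {B : Matrix (Fin (d+1)) (Fin (d+1)) K} (hB : IsIrredTridiag B) {lam : K}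
    {v w : Fin (d+1) → K} (hv : B.mulVec v = lam • v) (hw : B.mulVec w = lam • w) :
    w 0 • v - v 0 • w = 0 := by
  apply eig_zero hB (lam := lam)
  · rw [Matrix.mulVec_sub, Matrix.mulVec_smul, Matrix.mulVec_smul, hv, hw, smul_comm (v 0),
      smul_comm (w 0), ← smul_sub]
  · simp [mul_comm]

lemma diag_inj {As P Q : Matrix (Fin (d+1)) (Fin (d+1)) K} (hP : IsUnit P) (hQ : IsUnit Q)
    (hBs : (P⁻¹ * As * P).IsDiag) (hC : IsIrredTridiag (Q⁻¹ * As * Q)) :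
    Function.Injective fun i => (P⁻¹ * As * P) i i := by
  have hPd : IsUnit P.det := (Matrix.isUnit_iff_isUnit_det P).mp hP
  have hQd : IsUnit Q.det := (Matrix.isUnit_iff_isUnit_det Q).mp hQ
  intro i j hij0
  have hij : (P⁻¹ * As * P) i i = (P⁻¹ * As * P) j j := hij0
  clear hij0
  by_contra hne
  set Bs := P⁻¹ * As * P with hBsdef
  set C := Q⁻¹ * As * Q with hCdef
  set R := Q⁻¹ * P with hRdef
  have hRinj : Function.Injective R.mulVec := by
    intro u u' huu
    have := congrArg (R⁻¹.mulVec) huu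
    rwa [Matrix.mulVec_mulVec, Matrix.mulVec_mulVec, Matrix.nonsing_inv_mul, Matrix.one_mulVec,
      Matrix.one_mulVec] at this
    rw [hRdef, Matrix.det_mul]
    exact (IsUnit.of_mul_eq_one (a := (Q⁻¹).det) Q.det
      (by rw [← Matrix.det_mul, Matrix.nonsing_inv_mul _ hQd, Matrix.det_one])).mul hPd
  -- eigenvectors of Bs
  have heig : ∀ k : Fin (d+1), Bs.mulVec ((Pi.single k 1 : Fin (d+1) → K)) = Bs k k • (Pi.single k 1 : Fin (d+1) → K) := by
    intro k
    funext m
    rw [Matrix.mulVec_single]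
    rcases eq_or_ne m k with rfl | hmk
    · simp [mul_comm]
    · simp [hmk, hBs hmk]
  have hCR : C * R = R * Bs := by
    rw [hCdef, hRdef, hBsdef]
    calc Q⁻¹ * As * Q * (Q⁻¹ * P) = Q⁻¹ * As * (Q * Q⁻¹) * P := by
          simp only [Matrix.mul_assoc]
      _ = Q⁻¹ * As * P := by rw [Matrix.mul_nonsing_inv _ hQd]; simp [Matrix.mul_assoc]
      _ = Q⁻¹ * (P * P⁻¹) * As * P := by rw [Matrix.mul_nonsing_inv _ hPd]; simp [Matrix.mul_assoc]
      _ = Q⁻¹ * P * (P⁻¹ * As * P) := by simp [Matrix.mul_assoc]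
  have hCeig : ∀ k : Fin (d+1), C.mulVec (R.mulVec ((Pi.single k 1 : Fin (d+1) → K)))
      = Bs k k • R.mulVec ((Pi.single k 1 : Fin (d+1) → K)) := by
    intro k
    rw [Matrix.mulVec_mulVec, hCR, ← Matrix.mulVec_mulVec, heig k, Matrix.mulVec_smul]
  set v := R.mulVec (Pi.single i 1 : Fin (d+1) → K) with hvdef
  set w := R.mulVec (Pi.single j 1 : Fin (d+1) → K) with hwdef
  have hvi : C.mulVec v = Bs i i • v := hCeig i
  have hwj : C.mulVec w = Bs i i • w := by rw [show Bs i i = Bs j j from hij]; exact hCeig j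
  have hdep := eig_dep hC hvi hwj
  have hRdep : R.mulVec (w 0 • (Pi.single i 1 : Fin (d+1) → K) - v 0 • (Pi.single j 1 : Fin (d+1) → K)) = 0 := by
    rw [Matrix.mulVec_sub, Matrix.mulVec_smul, Matrix.mulVec_smul, ← hvdef, ← hwdef, hdep]
  have h0 : (w 0 • (Pi.single i 1 : Fin (d+1) → K) - v 0 • (Pi.single j 1 : Fin (d+1) → K)) = 0 := by
    apply hRinj
    rw [hRdep, Matrix.mulVec_zero]
  have hw0 : w 0 = 0 := by
    have := congrFun h0 i
    simpa [Pi.single_apply, hne] using this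
  have hv0 : v 0 = 0 := by
    have := congrFun h0 j
    simpa [Pi.single_apply, Ne.symm hne] using this
  have hv_zero : v = 0 := eig_zero hC hvi hv0
  have hsz : (Pi.single i 1 : Fin (d+1) → K) = 0 := by
    apply hRinj
    rw [Matrix.mulVec_zero, ← hvdef]
    exact hv_zero
  have := congrFun hsz i
  simp at this

lemma aeval_diag (dv : Fin (d+1) → K) (p : K[X]) :
    Polynomial.aeval (Matrix.diagonal dv) p = Matrix.diagonal (fun m => p.eval (dv m)) := by
  induction p using Polynomial.induction_on' with
  | add p q hp hq =>
    simp only [map_add, hp, hq, Polynomial.eval_add, ← Matrix.diagonal_add]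
  | monomial n a =>
    rw [Polynomial.aeval_monomial, Matrix.diagonal_pow, Matrix.algebraMap_eq_diagonal,
      Matrix.diagonal_mul_diagonal]
    congr 1
    funext m
    simp [Polynomial.eval_monomial]

end auxLemmas

lemma aeval_mem_subalg {K : Type*} [Field K] {A : Type*} [Semiring A] [Algebra K A]
    (T : Subalgebra K A) {x : A} (hx : x ∈ T) (p : K[X]) : Polynomial.aeval x p ∈ T := by
  induction p using Polynomial.induction_on' with
  | add p q hp hq => rw [map_add]; exact add_mem hp hq
  | monomial n a =>
    rw [Polynomial.aeval_monomial]
    exact mul_mem (T.algebraMap_mem a) (pow_mem hx n)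

section auxLemmas2
variable {K : Type*} [Field K] {d : ℕ}

lemma adjoin_BL_top {B L : Matrix (Fin (d+1)) (Fin (d+1)) K}
    (hB : IsIrredTridiag B) (hL : L.IsDiag)
    (hinj : Function.Injective fun i : Fin (d+1) => L i i) :
    Algebra.adjoin K {B, L} = ⊤ := by
  set T := Algebra.adjoin K ({B, L} : Set (Matrix (Fin (d+1)) (Fin (d+1)) K)) with hT
  have hBmem : B ∈ T := Algebra.subset_adjoin (Set.mem_insert _ _)
  have hLmem : L ∈ T := Algebra.subset_adjoin (Set.mem_insert_iff.mpr (Or.inr rfl))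
  have hLd : L = Matrix.diagonal (fun i => L i i) := by
    ext m l
    rcases eq_or_ne m l with rfl | hml
    · rw [Matrix.diagonal_apply_eq]
    · rw [Matrix.diagonal_apply_ne _ hml, hL hml]
  -- the diagonal idempotents are in T
  have hE : ∀ i : Fin (d+1), Matrix.single i i (1:K) ∈ T := by
    intro i
    set dv : Fin (d+1) → K := fun i => L i i with hdv
    set c : K := ∏ k ∈ Finset.univ.erase i, (dv i - dv k) with hc
    have hcne : c ≠ 0 := by
      rw [hc]
      apply Finset.prod_ne_zero_iff.mpr
      intro k hk
      exact sub_ne_zero.mpr fun h => (Finset.mem_erase.mp hk).1 (hinj h).symm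
    obtain ⟨p, hpev⟩ : ∃ p : K[X], ∀ m,
        p.eval (dv m) = ∏ k ∈ Finset.univ.erase i, (dv m - dv k) :=
      ⟨∏ k ∈ Finset.univ.erase i, (X - C (dv k)), fun m => by
        rw [Polynomial.eval_prod]
        exact Finset.prod_congr rfl fun k _ => by simp⟩
    have haev : Polynomial.aeval L p = c • Matrix.single i i (1:K) := by
      rw [hLd, aeval_diag]
      ext m l
      rcases eq_or_ne m l with rfl | hml
      · rw [Matrix.diagonal_apply_eq, hpev]
        rcases eq_or_ne m i with rfl | hmi
        · rw [Matrix.smul_apply, Matrix.single_apply_same, smul_eq_mul, mul_one, hc]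
        · have hz : ∏ k ∈ Finset.univ.erase i, (dv m - dv k) = 0 :=
            Finset.prod_eq_zero (Finset.mem_erase.mpr ⟨hmi, Finset.mem_univ m⟩) (sub_self _)
          rw [hz, Matrix.smul_apply,
            Matrix.single_apply_of_ne _ _ _ _ _ (fun h => hmi h.1.symm), smul_zero]
      · rw [Matrix.diagonal_apply_ne _ hml, Matrix.smul_apply,
          Matrix.single_apply_of_ne _ _ _ _ _ (by rintro ⟨rfl, rfl⟩; exact hml rfl),
          smul_zero]
    have hmem : Polynomial.aeval L p ∈ T := aeval_mem_subalg T hLmem p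
    have : Matrix.single i i (1:K) = c⁻¹ • Polynomial.aeval L p := by
      rw [haev, smul_smul, inv_mul_cancel₀ hcne, one_smul]
    rw [this]
    exact Subalgebra.smul_mem T hmem _
  -- E i * B * E j = B i j • unit i j
  have hEBE : ∀ i j : Fin (d+1),
      Matrix.single i i (1:K) * B * Matrix.single j j 1 = B i j • Matrix.single i j 1 := by
    intro i j
    ext a b
    rcases eq_or_ne b j with rfl | hb
    · rw [Matrix.mul_single_apply_same]
      rcases eq_or_ne a i with rfl | ha
      · rw [Matrix.single_mul_apply_same, Matrix.smul_apply,
          Matrix.single_apply_same]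
        simp
      · rw [Matrix.single_mul_apply_of_ne (h := ha), Matrix.smul_apply,
          Matrix.single_apply_of_ne _ _ _ _ _ (fun h => ha h.1.symm), smul_zero, zero_mul]
    · rw [Matrix.mul_single_apply_of_ne (hbj := hb), Matrix.smul_apply,
        Matrix.single_apply_of_ne _ _ _ _ _ (fun h => hb h.2.symm), smul_zero]
  have hsup : ∀ i j : Fin (d+1), ((i:ℕ) + 1 = j ∨ (j:ℕ) + 1 = i) →
      Matrix.single i j (1:K) ∈ T := by
    intro i j h
    have hne : B i j ≠ 0 := hB.2 i j h
    have : Matrix.single i j (1:K)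
        = (B i j)⁻¹ • (Matrix.single i i (1:K) * B * Matrix.single j j 1) := by
      rw [hEBE, smul_smul, inv_mul_cancel₀ hne, one_smul]
    rw [this]
    exact Subalgebra.smul_mem T (mul_mem (mul_mem (hE i) hBmem) (hE j)) _
  have hup : ∀ k : ℕ, ∀ i j : Fin (d+1), (i:ℕ) + k = (j:ℕ) → Matrix.single i j (1:K) ∈ T := by
    intro k
    induction k with
    | zero =>
      intro i j hij
      have : i = j := Fin.ext (by omega)
      subst this
      exact hE i
    | succ k IH =>
      intro i j hij
      have hj' : (i:ℕ) + k < d + 1 := by have := j.isLt; omega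
      have h1 : Matrix.single i (⟨(i:ℕ) + k, hj'⟩ : Fin (d+1)) (1:K) ∈ T := IH i _ rfl
      have h2 : Matrix.single (⟨(i:ℕ) + k, hj'⟩ : Fin (d+1)) j (1:K) ∈ T :=
        hsup _ j (Or.inl (by simpa [add_assoc] using hij))
      have := mul_mem h1 h2
      rwa [Matrix.single_mul_single_same, one_mul] at this
  have hdown : ∀ k : ℕ, ∀ i j : Fin (d+1), (j:ℕ) + k = (i:ℕ) → Matrix.single i j (1:K) ∈ T := by
    intro k
    induction k with
    | zero =>
      intro i j hij
      have : i = j := Fin.ext (by omega)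
      subst this
      exact hE i
    | succ k IH =>
      intro i j hij
      have hi' : (j:ℕ) + k < d + 1 := by have := i.isLt; omega
      have h1 : Matrix.single i (⟨(j:ℕ) + k, hi'⟩ : Fin (d+1)) (1:K) ∈ T :=
        hsup i _ (Or.inr (by simpa [add_assoc] using hij))
      have h2 : Matrix.single (⟨(j:ℕ) + k, hi'⟩ : Fin (d+1)) j (1:K) ∈ T := IH _ j rfl
      have := mul_mem h1 h2
      rwa [Matrix.single_mul_single_same, one_mul] at this
  have hall : ∀ i j : Fin (d+1), Matrix.single i j (1:K) ∈ T := by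
    intro i j
    rcases le_total (i:ℕ) (j:ℕ) with h | h
    · exact hup ((j:ℕ) - (i:ℕ)) i j (by omega)
    · exact hdown ((i:ℕ) - (j:ℕ)) i j (by omega)
  rw [eq_top_iff]
  intro X _
  rw [Matrix.matrix_eq_sum_single X]
  refine sum_mem fun i _ => sum_mem fun j _ => ?_
  rw [show Matrix.single i j (X i j) = X i j • Matrix.single i j (1:K) by
    rw [Matrix.smul_single, smul_eq_mul, mul_one]]
  exact Subalgebra.smul_mem T (hall i j) _

/-- transferring generation through conjugation -/
lemma adjoin_conj_top {A As P : Matrix (Fin (d+1)) (Fin (d+1)) K} (hP : IsUnit P)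
    (htop : Algebra.adjoin K {P⁻¹ * A * P, P⁻¹ * As * P} = ⊤) :
    Algebra.adjoin K {A, As} = ⊤ := by
  have hPd : IsUnit P.det := (Matrix.isUnit_iff_isUnit_det P).mp hP
  have hconj : ∀ Z : Matrix (Fin (d+1)) (Fin (d+1)) K, P * (P⁻¹ * Z * P) * P⁻¹ = Z := by
    intro Z
    rw [Matrix.mul_assoc P⁻¹ Z P, Matrix.mul_nonsing_inv_cancel_left _ _ hPd,
      Matrix.mul_nonsing_inv_cancel_right _ _ hPd]
  rw [eq_top_iff]
  intro X _
  have hY : P⁻¹ * X * P ∈ Algebra.adjoin K {P⁻¹ * A * P, P⁻¹ * As * P} := by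
    rw [htop]; trivial
  have key : ∀ y, y ∈ Algebra.adjoin K {P⁻¹ * A * P, P⁻¹ * As * P} →
      P * y * P⁻¹ ∈ Algebra.adjoin K {A, As} := by
    intro y hy
    induction hy using Algebra.adjoin_induction with
    | mem x hx =>
      rcases hx with rfl | hx
      · rw [hconj]; exact Algebra.subset_adjoin (Set.mem_insert _ _)
      · rw [Set.mem_singleton_iff] at hx
        subst hx
        rw [hconj]; exact Algebra.subset_adjoin (Set.mem_insert_iff.mpr (Or.inr rfl))
    | algebraMap r =>
      have hc : P * (algebraMap K (Matrix (Fin (d+1)) (Fin (d+1)) K) r) * P⁻¹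
          = algebraMap K (Matrix (Fin (d+1)) (Fin (d+1)) K) r := by
        rw [← Algebra.commutes r P, Matrix.mul_assoc, Matrix.mul_nonsing_inv _ hPd, mul_one]
      rw [hc]
      exact Subalgebra.algebraMap_mem _ r
    | add x y hx hy ihx ihy =>
      rw [Matrix.mul_add, Matrix.add_mul]; exact add_mem ihx ihy
    | mul x y hx hy ihx ihy =>
      have : P * (x * y) * P⁻¹ = (P * x * P⁻¹) * (P * y * P⁻¹) := by
        simp only [Matrix.mul_assoc, Matrix.nonsing_inv_mul_cancel_left P (h := hPd)]
      rw [this]; exact mul_mem ihx ihy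
  have := key _ hY
  rwa [hconj] at this

lemma fix_of_top {A As : Matrix (Fin (d+1)) (Fin (d+1)) K}
    (htop : Algebra.adjoin K {A, As} = ⊤)
    (h : Matrix (Fin (d+1)) (Fin (d+1)) K ≃ₗ[K] Matrix (Fin (d+1)) (Fin (d+1)) K)
    (hmul : ∀ X Y, h (X * Y) = h X * h Y) (hA : h A = A) (hAs : h As = As) :
    ∀ X, h X = X := by
  have h1 : h 1 = 1 := by
    have e := hmul (h.symm 1) 1
    rw [mul_one, h.apply_symm_apply, one_mul] at e
    exact e.symm
  intro X
  have hX : X ∈ Algebra.adjoin K ({A, As} : Set (Matrix (Fin (d+1)) (Fin (d+1)) K)) := by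
    rw [htop]; trivial
  induction hX using Algebra.adjoin_induction with
  | mem x hx =>
    rcases hx with rfl | hx
    · exact hA
    · rw [Set.mem_singleton_iff] at hx; subst hx; exact hAs
  | algebraMap r => rw [Algebra.algebraMap_eq_smul_one, _root_.map_smul, h1]
  | add x y hx hy ihx ihy => rw [map_add, ihx, ihy]
  | mul x y hx hy ihx ihy => rw [hmul, ihx, ihy]

end auxLemmas2

/-- diagonal scaling making an irreducible tridiagonal matrix symmetric-conjugate -/
def dvec {K : Type*} [Field K] {n : ℕ} (B : Matrix (Fin n) (Fin n) K) : ℕ → K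
  | 0 => 1
  | k+1 => dvec B k * mentry B (k+1) k / mentry B k (k+1)

section auxLemmas3
variable {K : Type*} [Field K] {d : ℕ}

lemma dvec_ne {B : Matrix (Fin (d+1)) (Fin (d+1)) K} (hB : IsIrredTridiag B) :
    ∀ m : ℕ, m < d + 1 → dvec B m ≠ 0 := by
  intro m
  induction m with
  | zero => intro _; simp [dvec]
  | succ k IH =>
    intro hk
    have hk' : k < d + 1 := by omega
    have h1 : mentry B (k+1) k = B ⟨k+1, hk⟩ ⟨k, hk'⟩ := by
      rw [mentry, dif_pos ⟨hk, hk'⟩]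
    have h2 : mentry B k (k+1) = B ⟨k, hk'⟩ ⟨k+1, hk⟩ := by
      rw [mentry, dif_pos ⟨hk', hk⟩]
    have hn1 : B (⟨k+1, hk⟩ : Fin (d+1)) ⟨k, hk'⟩ ≠ 0 := hB.2 _ _ (Or.inr rfl)
    have hn2 : B (⟨k, hk'⟩ : Fin (d+1)) ⟨k+1, hk⟩ ≠ 0 := hB.2 _ _ (Or.inl rfl)
    show dvec B k * mentry B (k+1) k / mentry B k (k+1) ≠ 0
    rw [h1, h2]
    exact div_ne_zero (mul_ne_zero (IH hk') hn1) hn2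

lemma dvec_rel {B : Matrix (Fin (d+1)) (Fin (d+1)) K} (hB : IsIrredTridiag B) :
    ∀ i j : Fin (d+1), dvec B (i : ℕ) * B j i = B i j * dvec B (j : ℕ) := by
  intro i j
  by_cases h1 : (i : ℕ) = (j : ℕ)
  · have : i = j := Fin.ext h1
    subst this
    exact mul_comm _ _
  · by_cases h2 : (i : ℕ) + 1 = (j : ℕ)
    · -- j = i + 1
      have hji : (j : ℕ) = (i : ℕ) + 1 := h2.symm
      have hBij : B i j ≠ 0 := hB.2 i j (Or.inl h2)
      have hdj : dvec B (j : ℕ) = dvec B (i : ℕ) * B j i / B i j := by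
        rw [hji]
        show dvec B (i:ℕ) * mentry B ((i:ℕ)+1) (i:ℕ) / mentry B (i:ℕ) ((i:ℕ)+1)
          = dvec B (i : ℕ) * B j i / B i j
        have hlt : (i:ℕ)+1 < d+1 := by omega
        have e1 : mentry B ((i:ℕ)+1) (i:ℕ) = B j i := by
          rw [mentry, dif_pos ⟨hlt, i.isLt⟩]
          rw [show (⟨(i:ℕ)+1, hlt⟩ : Fin (d+1)) = j from Fin.ext h2,
            show (⟨(i:ℕ), i.isLt⟩ : Fin (d+1)) = i from Fin.ext rfl]
        have e2 : mentry B (i:ℕ) ((i:ℕ)+1) = B i j := by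
          rw [mentry, dif_pos ⟨i.isLt, hlt⟩]
          rw [show (⟨(i:ℕ)+1, hlt⟩ : Fin (d+1)) = j from Fin.ext h2,
            show (⟨(i:ℕ), i.isLt⟩ : Fin (d+1)) = i from Fin.ext rfl]
        rw [e1, e2]
      rw [hdj, mul_comm (B i j), div_mul_cancel₀ _ hBij]
    · by_cases h3 : (j : ℕ) + 1 = (i : ℕ)
      · have hBji : B j i ≠ 0 := hB.2 j i (Or.inl h3)
        have hdi : dvec B (i : ℕ) = dvec B (j : ℕ) * B i j / B j i := by
          rw [← h3]
          show dvec B (j:ℕ) * mentry B ((j:ℕ)+1) (j:ℕ) / mentry B (j:ℕ) ((j:ℕ)+1)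
            = dvec B (j : ℕ) * B i j / B j i
          have hlt : (j:ℕ)+1 < d+1 := by omega
          have e1 : mentry B ((j:ℕ)+1) (j:ℕ) = B i j := by
            rw [mentry, dif_pos ⟨hlt, j.isLt⟩]
            rw [show (⟨(j:ℕ)+1, hlt⟩ : Fin (d+1)) = i from Fin.ext h3,
              show (⟨(j:ℕ), j.isLt⟩ : Fin (d+1)) = j from Fin.ext rfl]
          have e2 : mentry B (j:ℕ) ((j:ℕ)+1) = B j i := by
            rw [mentry, dif_pos ⟨j.isLt, hlt⟩]
            rw [show (⟨(j:ℕ)+1, hlt⟩ : Fin (d+1)) = i from Fin.ext h3,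
              show (⟨(j:ℕ), j.isLt⟩ : Fin (d+1)) = j from Fin.ext rfl]
          rw [e1, e2]
        rw [hdi, div_mul_cancel₀ _ hBji]
        exact mul_comm _ _
      · have hz1 : B i j = 0 := hB.1 i j (by omega)
        have hz2 : B j i = 0 := hB.1 j i (by omega)
        rw [hz1, hz2, mul_zero, zero_mul]

end auxLemmas3

theorem stmt7 {K : Type*} [Field K] {d : ℕ} (P : LeonardPair K d) :
    (∃! f : Matrix (Fin (d+1)) (Fin (d+1)) K ≃ₗ[K] Matrix (Fin (d+1)) (Fin (d+1)) K,
      (∀ X Y, f (X * Y) = f Y * f X) ∧ f P.A = P.A ∧ f P.As = P.As) ∧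
    (∀ f : Matrix (Fin (d+1)) (Fin (d+1)) K ≃ₗ[K] Matrix (Fin (d+1)) (Fin (d+1)) K,
      (∀ X Y, f (X * Y) = f Y * f X) → f P.A = P.A → f P.As = P.As →
      ∀ X, f (f X) = X) := by

  obtain ⟨P1, hP1, hB, hL⟩ := P.cond1
  obtain ⟨P2, hP2, hAd, hC⟩ := P.cond2
  have hP1d : IsUnit P1.det := (Matrix.isUnit_iff_isUnit_det P1).mp hP1
  set A := P.A with hA
  set As := P.As with hAs
  set B := P1⁻¹ * A * P1 with hBdef
  set L := P1⁻¹ * As * P1 with hLdef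
  have hinj : Function.Injective fun i : Fin (d+1) => L i i := diag_inj hP1 hP2 hL hC
  have htop : Algebra.adjoin K {A, As} = ⊤ :=
    adjoin_conj_top hP1 (adjoin_BL_top hB hL hinj)
  -- construct the antiautomorphism
  set dl : Fin (d+1) → K := fun i => dvec B (i : ℕ) with hdl
  set D : Matrix (Fin (d+1)) (Fin (d+1)) K := Matrix.diagonal dl with hD
  have hDBt : D * Bᵀ = B * D := by
    ext i j
    rw [hD, Matrix.diagonal_mul, Matrix.mul_diagonal, Matrix.transpose_apply]
    exact dvec_rel hB i j
  have hLd : L = Matrix.diagonal (fun i => L i i) := by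
    ext m l
    rcases eq_or_ne m l with rfl | hml
    · rw [Matrix.diagonal_apply_eq]
    · rw [Matrix.diagonal_apply_ne _ hml, hL hml]
  have hDLt : D * Lᵀ = L * D := by
    rw [hD]
    nth_rewrite 1 [hLd]
    nth_rewrite 2 [hLd]
    rw [Matrix.diagonal_transpose, Matrix.diagonal_mul_diagonal, Matrix.diagonal_mul_diagonal]
    exact congrArg Matrix.diagonal (funext fun m => mul_comm _ _)
  set Q : Matrix (Fin (d+1)) (Fin (d+1)) K := P1 * D * P1ᵀ with hQ
  have hQd : IsUnit Q.det := by
    rw [hQ, Matrix.det_mul, Matrix.det_mul, Matrix.det_transpose, hD, Matrix.det_diagonal]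
    refine (hP1d.mul (isUnit_iff_ne_zero.mpr ?_)).mul hP1d
    exact Finset.prod_ne_zero_iff.mpr fun i _ => dvec_ne hB _ i.isLt
  have hQsymm : Qᵀ = Q := by
    rw [hQ, Matrix.transpose_mul (P1 * D) P1ᵀ, Matrix.transpose_mul P1 D,
      Matrix.transpose_transpose, hD, Matrix.diagonal_transpose, Matrix.mul_assoc]
  have hQinvT : Q⁻¹ᵀ = Q⁻¹ := by rw [Matrix.transpose_nonsing_inv, hQsymm]
  -- key exchange identities
  have hXP : ∀ Z : Matrix (Fin (d+1)) (Fin (d+1)) K,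
      Z * P1 = P1 * (P1⁻¹ * Z * P1) := by
    intro Z
    rw [Matrix.mul_assoc P1⁻¹ Z P1, Matrix.mul_nonsing_inv_cancel_left _ _ hP1d]
  have hkey : ∀ Z W : Matrix (Fin (d+1)) (Fin (d+1)) K,
      Z * P1 = P1 * W → D * Wᵀ = W * D → Q * Zᵀ = Z * Q := by
    intro Z W h1 h2
    calc Q * Zᵀ = P1 * D * (P1ᵀ * Zᵀ) := by rw [hQ, Matrix.mul_assoc]
      _ = P1 * D * (Z * P1)ᵀ := by rw [Matrix.transpose_mul]
      _ = P1 * D * (Wᵀ * P1ᵀ) := by rw [h1, Matrix.transpose_mul]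
      _ = P1 * (D * Wᵀ) * P1ᵀ := by simp only [Matrix.mul_assoc]
      _ = P1 * (W * D) * P1ᵀ := by rw [h2]
      _ = P1 * W * D * P1ᵀ := by simp only [Matrix.mul_assoc]
      _ = Z * P1 * D * P1ᵀ := by rw [h1]
      _ = Z * Q := by rw [hQ]; simp only [Matrix.mul_assoc]
  have hQA : Q * Aᵀ = A * Q := hkey A B (hXP A) hDBt
  have hQAs : Q * Asᵀ = As * Q := hkey As L (hXP As) hDLt
  -- the linear equivalence
  set fl : Matrix (Fin (d+1)) (Fin (d+1)) K →ₗ[K] Matrix (Fin (d+1)) (Fin (d+1)) K :=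
    { toFun := fun X => Q * Xᵀ * Q⁻¹
      map_add' := fun X Y => by
        simp only [Matrix.transpose_add, Matrix.mul_add, Matrix.add_mul]
      map_smul' := fun c X => by
        simp only [Matrix.transpose_smul, mul_smul_comm, smul_mul_assoc,
          RingHom.id_apply] } with hfl
  have hflapp : ∀ X, fl X = Q * Xᵀ * Q⁻¹ := fun X => rfl
  have hinvol : ∀ X, fl (fl X) = X := by
    intro X
    rw [hflapp, hflapp, Matrix.transpose_mul, Matrix.transpose_mul, Matrix.transpose_transpose,
      hQinvT, hQsymm, Matrix.mul_nonsing_inv_cancel_left _ _ hQd,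
      Matrix.mul_nonsing_inv_cancel_right _ _ hQd]
  set f : Matrix (Fin (d+1)) (Fin (d+1)) K ≃ₗ[K] Matrix (Fin (d+1)) (Fin (d+1)) K :=
    LinearEquiv.ofLinear fl fl (LinearMap.ext hinvol) (LinearMap.ext hinvol) with hf
  have hfapp : ∀ X, f X = Q * Xᵀ * Q⁻¹ := fun X => rfl
  have hanti : ∀ X Y, f (X * Y) = f Y * f X := by
    intro X Y
    rw [hfapp, hfapp, hfapp, Matrix.transpose_mul]
    simp only [Matrix.mul_assoc]
    rw [Matrix.nonsing_inv_mul_cancel_left Q (h := hQd)]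
  have hfA : f A = A := by
    rw [hfapp, hQA, Matrix.mul_nonsing_inv_cancel_right _ _ hQd]
  have hfAs : f As = As := by
    rw [hfapp, hQAs, Matrix.mul_nonsing_inv_cancel_right _ _ hQd]
  constructor
  · refine ⟨f, ⟨hanti, hfA, hfAs⟩, ?_⟩
    rintro g ⟨ganti, gA, gAs⟩
    -- h := f.symm ∘ g is an automorphism fixing A, As
    have hsymm_mul : ∀ U V, f.symm (U * V) = f.symm V * f.symm U := by
      intro U V
      apply f.injective
      rw [f.apply_symm_apply, hanti, f.apply_symm_apply, f.apply_symm_apply]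
    have hsymmA : f.symm A = A := by
      have h := f.symm_apply_apply A
      rwa [hfA] at h
    have hsymmAs : f.symm As = As := by
      have h := f.symm_apply_apply As
      rwa [hfAs] at h
    set h := g.trans f.symm with hh
    have hmul : ∀ X Y, h (X * Y) = h X * h Y := by
      intro X Y
      show f.symm (g (X * Y)) = f.symm (g X) * f.symm (g Y)
      rw [ganti, hsymm_mul]
    have hhA : h A = A := by show f.symm (g A) = A; rw [gA, hsymmA]
    have hhAs : h As = As := by show f.symm (g As) = As; rw [gAs, hsymmAs]
    have hfix := fix_of_top htop h hmul hhA hhAs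
    apply LinearEquiv.ext
    intro X
    have := hfix X
    have : f.symm (g X) = X := this
    calc g X = f (f.symm (g X)) := (f.apply_symm_apply _).symm
      _ = f X := by rw [this]
  · intro g ganti gA gAs
    set h := g.trans g with hh
    have hmul : ∀ X Y, h (X * Y) = h X * h Y := by
      intro X Y
      show g (g (X * Y)) = g (g X) * g (g Y)
      rw [ganti, ganti]
    have hhA : h A = A := by show g (g A) = A; rw [gA, gA]
    have hhAs : h As = As := by show g (g As) = As; rw [gAs, gAs]
    exact fix_of_top htop h hmul hhA hhAs
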